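/- The Probabilistic Serial mechanism is not incentive-compatible. Concretely, with 3 agents and 3 items a, b, c: if agent 1 reports b ≻ a ≻ c, agent 2 reports a ≻ b ≻ c, and agent 3 reports a ≻ c ≻ b, then agent 1's allocation of (a, b, c) is (0, 3/4, 1/4); if instead agent 1 reports a ≻ b ≻ c (agents 2 and 3 unchanged), agent 1's allocation becomes (1/3, 1/2, 1/6). Hence, for agent 1's cardinal utilities a_{1a} = 0.9, a_{1b} = 1, a_{1c} = 0 (compatible with the true order b ≻ a ≻ c), its utility increases from 0.75 under the truthful report to 0.8 under the misreport. -/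

import Mathlib

open MeasureTheory

/-- An execution of the Probabilistic Serial eating process with `n` agents and `m` items
(each of supply 1).  Agent `i` reports the strict preference order encoded by the injective
rank function `rk i` (`rk i j < rk i j'` means agent `i` ranks item `j` above item `j'`).
`active i t` tells whether agent `i` participates (eats at rate 1) at time `t`; the normal
scenario is `active = fun _ _ => True`, pausing/removing agents is modelled by making them
inactive.  `eats i t = some j` means agent `i` is eating item `j` at time `t`, and `rem j t`
is the remaining supply of item `j` at time `t`: it equals `1` minus the total time agents
have spent eating `j` during `(0, t]`.  An active agent always eats its most preferred item
among those with positive remaining supply. -/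
structure PSExec (n m : ℕ) (rk : Fin n → Fin m → ℕ) (active : Fin n → ℝ → Prop) where
  eats : Fin n → ℝ → Option (Fin m)
  rem : Fin m → ℝ → ℝ
  meas : ∀ i j, MeasurableSet {t : ℝ | eats i t = some j}
  rem_def : ∀ j, ∀ t : ℝ, 0 ≤ t →
    rem j t = 1 - ∑ i : Fin n,
      (volume {s : ℝ | 0 < s ∧ s ≤ t ∧ eats i s = some j}).toReal
  eats_iff : ∀ i, ∀ t : ℝ, 0 ≤ t → active i t → ∀ j,
    (eats i t = some j ↔ 0 < rem j t ∧ ∀ j', 0 < rem j' t → rk i j ≤ rk i j')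
  eats_none : ∀ i, ∀ t : ℝ, ¬ active i t → eats i t = none

namespace PSExec

variable {n m : ℕ} {rk : Fin n → Fin m → ℕ} {active : Fin n → ℝ → Prop}

/-- The total amount of item `j` eaten by agent `i` (the allocation `x i j`). -/
noncomputable def alloc (E : PSExec n m rk active) (i : Fin n) (j : Fin m) : ℝ :=
  (volume {s : ℝ | 0 < s ∧ E.eats i s = some j}).toReal

/-- The expected utility of agent `i` with cardinal utilities `a`. -/
noncomputable def utility (E : PSExec n m rk active) (a : Fin m → ℝ) (i : Fin n) : ℝ :=
  ∑ j, a j * E.alloc i j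

/-- Item `j` is exhausted exactly at time `τ`. -/
def exhaustedAt (E : PSExec n m rk active) (j : Fin m) (τ : ℝ) : Prop :=
  0 < τ ∧ E.rem j τ = 0 ∧ ∀ s : ℝ, 0 ≤ s → s < τ → 0 < E.rem j s

/-- Agent `i` is eating item `j` at the moment `τ`, in the left-limit sense (this is the
sense used for "eating an item at the moment of its exhaustion"). -/
def eatsAt (E : PSExec n m rk active) (i : Fin n) (j : Fin m) (τ : ℝ) : Prop :=
  ∃ δ > 0, ∀ s : ℝ, τ - δ < s → s < τ → E.eats i s = some j

/-- `T` is the exact moment at which the last item of `Obar` is exhausted. -/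
def exhaustTime (E : PSExec n m rk active) (Obar : Finset (Fin m)) (T : ℝ) : Prop :=
  (∀ j ∈ Obar, E.rem j T = 0) ∧ ∀ s : ℝ, 0 ≤ s → s < T → ∃ j ∈ Obar, 0 < E.rem j s

end PSExec

/-- Dichotomous cardinal utilities with interest set `Obar`. -/
def dicho {m : ℕ} (Obar : Finset (Fin m)) : Fin m → ℝ :=
  fun j => if j ∈ Obar then 1 else 0


namespace PSExec

variable {n m : ℕ} {rk : Fin n → Fin m → ℕ} {active : Fin n → ℝ → Prop}

lemma vol_ne_top (P : ℝ → Prop) (t0 t : ℝ) :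
    volume {s : ℝ | t0 < s ∧ s ≤ t ∧ P s} ≠ ⊤ := by
  have h : {s : ℝ | t0 < s ∧ s ≤ t ∧ P s} ⊆ Set.Ioc t0 t := fun s hs => ⟨hs.1, hs.2.1⟩
  exact ne_top_of_le_ne_top (by simp [Real.volume_Ioc]) (measure_mono h)

lemma vol_le (P : ℝ → Prop) {t0 t : ℝ} (h : t0 ≤ t) :
    (volume {s : ℝ | t0 < s ∧ s ≤ t ∧ P s}).toReal ≤ t - t0 := by
  have h1 : volume {s : ℝ | t0 < s ∧ s ≤ t ∧ P s} ≤ ENNReal.ofReal (t - t0) := by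
    rw [← Real.volume_Ioc]; exact measure_mono fun s hs => ⟨hs.1, hs.2.1⟩
  calc (volume {s : ℝ | t0 < s ∧ s ≤ t ∧ P s}).toReal
      ≤ (ENNReal.ofReal (t - t0)).toReal := ENNReal.toReal_mono (by simp) h1
    _ = t - t0 := ENNReal.toReal_ofReal (by linarith)

lemma rem_sub (E : PSExec n m rk active) (j : Fin m) {t0 t : ℝ} (h0 : 0 ≤ t0) (h : t0 ≤ t) :
    E.rem j t = E.rem j t0 -
      ∑ i, (volume {s : ℝ | t0 < s ∧ s ≤ t ∧ E.eats i s = some j}).toReal := by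
  rw [E.rem_def j t (h0.trans h), E.rem_def j t0 h0]
  have key : ∀ i : Fin n,
      (volume {s : ℝ | 0 < s ∧ s ≤ t ∧ E.eats i s = some j}).toReal
      = (volume {s : ℝ | 0 < s ∧ s ≤ t0 ∧ E.eats i s = some j}).toReal
        + (volume {s : ℝ | t0 < s ∧ s ≤ t ∧ E.eats i s = some j}).toReal := by
    intro i
    have hset : {s : ℝ | 0 < s ∧ s ≤ t ∧ E.eats i s = some j}
        = {s : ℝ | 0 < s ∧ s ≤ t0 ∧ E.eats i s = some j}
          ∪ {s : ℝ | t0 < s ∧ s ≤ t ∧ E.eats i s = some j} := by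
      ext s
      simp only [Set.mem_setOf_eq, Set.mem_union]
      constructor
      · rintro ⟨h1, h2, h3⟩
        rcases le_or_gt s t0 with hc | hc
        · exact Or.inl ⟨h1, hc, h3⟩
        · exact Or.inr ⟨hc, h2, h3⟩
      · rintro (⟨h1, h2, h3⟩ | ⟨h1, h2, h3⟩)
        · exact ⟨h1, h2.trans h, h3⟩
        · exact ⟨h0.trans_lt h1, h2, h3⟩
    have hdisj : Disjoint {s : ℝ | 0 < s ∧ s ≤ t0 ∧ E.eats i s = some j}
        {s : ℝ | t0 < s ∧ s ≤ t ∧ E.eats i s = some j} := by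
      rw [Set.disjoint_left]
      rintro s ⟨_, h2, _⟩ ⟨h1', _, _⟩
      exact absurd h2 (not_le.2 h1')
    have hmeas : MeasurableSet {s : ℝ | t0 < s ∧ s ≤ t ∧ E.eats i s = some j} := by
      have he : {s : ℝ | t0 < s ∧ s ≤ t ∧ E.eats i s = some j}
          = Set.Ioc t0 t ∩ {s | E.eats i s = some j} := by
        ext s; simp [Set.mem_Ioc, and_assoc]
      rw [he]; exact measurableSet_Ioc.inter (E.meas i j)
    rw [hset, measure_union hdisj hmeas,
      ENNReal.toReal_add (vol_ne_top _ _ _) (vol_ne_top _ _ _)]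
  rw [Finset.sum_congr rfl fun i _ => key i, Finset.sum_add_distrib]
  ring

lemma rem_mono (E : PSExec n m rk active) (j : Fin m) {t0 t : ℝ} (h0 : 0 ≤ t0) (h : t0 ≤ t) :
    E.rem j t ≤ E.rem j t0 := by
  rw [E.rem_sub j h0 h]
  have hnn : (0:ℝ) ≤ ∑ i, (volume {s : ℝ | t0 < s ∧ s ≤ t ∧ E.eats i s = some j}).toReal :=
    Finset.sum_nonneg fun i _ => ENNReal.toReal_nonneg
  linarith

lemma rem_lip (E : PSExec n m rk active) (j : Fin m) {t0 t : ℝ} (h0 : 0 ≤ t0) (h : t0 ≤ t) :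
    E.rem j t0 - n * (t - t0) ≤ E.rem j t := by
  rw [E.rem_sub j h0 h]
  have hb : ∑ i, (volume {s : ℝ | t0 < s ∧ s ≤ t ∧ E.eats i s = some j}).toReal
      ≤ ∑ _i : Fin n, (t - t0) := Finset.sum_le_sum fun i _ => vol_le _ h
  rw [Finset.sum_const, Finset.card_univ, Fintype.card_fin, nsmul_eq_mul] at hb
  linarith

lemma rem_zero (E : PSExec n m rk active) (j : Fin m) : E.rem j 0 = 1 := by
  rw [E.rem_def j 0 le_rfl]
  have he : ∀ i : Fin n, {s : ℝ | 0 < s ∧ s ≤ 0 ∧ E.eats i s = some j} = ∅ := by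
    intro i; ext s
    simp only [Set.mem_setOf_eq, Set.mem_empty_iff_false, iff_false]
    rintro ⟨h1, h2, _⟩; linarith
  simp [he]

lemma eats_pos_rem (E : PSExec n m rk (fun _ _ => True)) {i : Fin n} {j : Fin m} {s : ℝ}
    (hs : 0 ≤ s) (h : E.eats i s = some j) : 0 < E.rem j s :=
  ((E.eats_iff i s hs trivial j).1 h).1

lemma not_eats_of_rem (E : PSExec n m rk (fun _ _ => True)) (i : Fin n) {j : Fin m} {s : ℝ}
    (hs : 0 ≤ s) (h : E.rem j s ≤ 0) : E.eats i s ≠ some j :=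
  fun hc => absurd (E.eats_pos_rem hs hc) (not_lt.2 h)

lemma not_eats_of_better (E : PSExec n m rk (fun _ _ => True)) {i : Fin n} {j j' : Fin m}
    {s : ℝ} (hs : 0 ≤ s) (hpos : 0 < E.rem j' s) (hlt : rk i j' < rk i j) :
    E.eats i s ≠ some j := fun hc =>
  absurd (((E.eats_iff i s hs trivial j).1 hc).2 j' hpos) (not_le.2 hlt)

lemma eats_eq (E : PSExec n m rk (fun _ _ => True)) (i : Fin n) {s : ℝ} (hs : 0 ≤ s)
    {j : Fin m} (h1 : 0 < E.rem j s) (h2 : ∀ j', 0 < E.rem j' s → rk i j ≤ rk i j') :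
    E.eats i s = some j :=
  (E.eats_iff i s hs trivial j).2 ⟨h1, h2⟩

lemma vol_squeeze {S A B : Set ℝ} (hA : A ⊆ S) (hB : S ⊆ B)
    (hAB : volume A = volume B) : volume S = volume B :=
  le_antisymm (measure_mono hB) (hAB ▸ measure_mono hA)

end PSExec

namespace PSExec

variable {n m : ℕ} {rk : Fin n → Fin m → ℕ}

lemma step (E : PSExec n m rk (fun _ _ => True)) {t0 t1 : ℝ} (r : Fin m → ℝ)
    (J : Fin n → Fin m) (k : Fin m → ℝ)
    (ht0 : 0 ≤ t0) (ht01 : t0 < t1)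
    (hr : ∀ j, E.rem j t0 = r j)
    (hJpos : ∀ i, 0 < r (J i))
    (hJmin : ∀ i j', 0 < r j' → rk i (J i) ≤ rk i j')
    (hk : ∀ j, k j = ∑ i : Fin n, (if J i = j then (1:ℝ) else 0))
    (hpos : ∀ j t, 0 < r j → t0 ≤ t → t < t1 → 0 < r j - k j * (t - t0)) :
    (∀ s, t0 < s → s < t1 → ∀ i, E.eats i s = some (J i)) ∧
    (∀ t, t0 ≤ t → t ≤ t1 → ∀ j, E.rem j t = r j - k j * (t - t0)) := by
  classical
  -- the remaining-supply formula holds as long as everyone has been eating J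
  have remF : ∀ u, t0 ≤ u →
      (∀ s, t0 < s → s < u → ∀ i, E.eats i s = some (J i)) →
      ∀ j, E.rem j u = r j - k j * (u - t0) := by
    intro u hu hEats j
    rw [E.rem_sub j ht0 hu, hr j, hk j]
    have key : ∀ i : Fin n,
        (volume {s : ℝ | t0 < s ∧ s ≤ u ∧ E.eats i s = some j}).toReal
        = (if J i = j then (1:ℝ) else 0) * (u - t0) := by
      intro i
      by_cases hij : J i = j
      · have hA : Set.Ioo t0 u ⊆ {s : ℝ | t0 < s ∧ s ≤ u ∧ E.eats i s = some j} :=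
          fun s hs => ⟨hs.1, hs.2.le, by rw [← hij]; exact hEats s hs.1 hs.2 i⟩
        have hB : {s : ℝ | t0 < s ∧ s ≤ u ∧ E.eats i s = some j} ⊆ Set.Ioc t0 u :=
          fun s hs => ⟨hs.1, hs.2.1⟩
        have h1 := measure_mono (μ := volume) hA
        have h2 := measure_mono (μ := volume) hB
        rw [Real.volume_Ioo] at h1
        rw [Real.volume_Ioc] at h2
        have hv : volume {s : ℝ | t0 < s ∧ s ≤ u ∧ E.eats i s = some j}
            = ENNReal.ofReal (u - t0) := le_antisymm h2 h1
        rw [hv, ENNReal.toReal_ofReal (by linarith), if_pos hij, one_mul]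
      · have hB : {s : ℝ | t0 < s ∧ s ≤ u ∧ E.eats i s = some j} ⊆ {u} := by
          intro s hs
          rcases lt_or_eq_of_le hs.2.1 with hlt | heq
          · have h3 := hEats s hs.1 hlt i
            exact absurd (Option.some.inj (h3.symm.trans hs.2.2)) hij
          · exact Set.mem_singleton_iff.2 heq
        have h2 := measure_mono (μ := volume) hB
        rw [Real.volume_singleton] at h2
        rw [le_zero_iff.1 h2]
        simp [hij]
    rw [Finset.sum_congr rfl fun i _ => key i, ← Finset.sum_mul]
  -- extension lemma
  have ext : ∀ u, t0 ≤ u → u < t1 →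
      (∀ j, E.rem j u = r j - k j * (u - t0)) →
      ∃ ε > 0, u + ε ≤ t1 ∧ ∀ s, u ≤ s → s ≤ u + ε → ∀ i, E.eats i s = some (J i) := by
    intro u hu hut hrem
    obtain ⟨δ, hδ, hδle⟩ : ∃ δ > 0, ∀ j, 0 < r j → δ ≤ E.rem j u := by
      by_cases hF : (Finset.univ.filter (fun j => 0 < r j)).Nonempty
      · refine ⟨(Finset.univ.filter (fun j => 0 < r j)).inf' hF (fun j => E.rem j u), ?_, ?_⟩
        · refine (Finset.lt_inf'_iff hF).2 fun j hj => ?_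
          rw [hrem j]
          exact hpos j u (Finset.mem_filter.1 hj).2 hu hut
        · intro j hjr
          exact Finset.inf'_le _ (Finset.mem_filter.2 ⟨Finset.mem_univ j, hjr⟩)
      · exact ⟨1, one_pos, fun j hjr =>
          absurd ⟨j, Finset.mem_filter.2 ⟨Finset.mem_univ j, hjr⟩⟩ hF⟩
    refine ⟨min (t1 - u) (δ / (n + 1)), lt_min (by linarith) (by positivity), ?_, ?_⟩
    · have := min_le_left (t1 - u) (δ / (n + 1)); linarith
    · intro s hus hsε i
      have hs0 : 0 ≤ s := le_trans (ht0.trans hu) hus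
      have hεr : min (t1 - u) (δ / (n + 1)) ≤ δ / (n + 1) := min_le_right _ _
      have hposP : ∀ j, 0 < r j → 0 < E.rem j s := by
        intro j hjr
        have h1 : E.rem j u - n * (s - u) ≤ E.rem j s := E.rem_lip j (ht0.trans hu) hus
        have h2 : δ ≤ E.rem j u := hδle j hjr
        have h4 : (n:ℝ) * (s - u) ≤ n * (δ / (n + 1)) :=
          mul_le_mul_of_nonneg_left (by linarith) (Nat.cast_nonneg n)
        have h5 : (n:ℝ) * (δ / (n + 1)) < δ := by
          rw [← mul_div_assoc, div_lt_iff₀ (by positivity)]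
          nlinarith
        linarith
      have hnegP : ∀ j, ¬ (0 < r j) → E.rem j s ≤ 0 := by
        intro j hjr
        have hm := E.rem_mono j ht0 (hu.trans hus)
        rw [hr j] at hm
        linarith [not_lt.1 hjr]
      exact E.eats_eq i hs0 (hposP _ (hJpos i))
        (fun j' hj' => hJmin i j' (by by_contra hc; exact absurd hj' (not_lt.2 (hnegP j' hc))))
  -- continuous induction via sSup
  set G : Set ℝ := {t | t ∈ Set.Icc t0 t1 ∧
      ∀ s, t0 < s → s < t → ∀ i, E.eats i s = some (J i)} with hG
  have hGt0 : t0 ∈ G :=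
    ⟨⟨le_refl t0, ht01.le⟩, fun s hs1 hs2 _ => absurd (hs1.trans hs2) (lt_irrefl t0)⟩
  have hGbdd : BddAbove G := ⟨t1, fun x hx => hx.1.2⟩
  set u := sSup G with hu
  have hu1 : t0 ≤ u := le_csSup hGbdd hGt0
  have hu2 : u ≤ t1 := csSup_le ⟨t0, hGt0⟩ fun x hx => hx.1.2
  have hEatsu : ∀ s, t0 < s → s < u → ∀ i, E.eats i s = some (J i) := by
    intro s hs1 hs2 i
    obtain ⟨t, htG, hst⟩ := exists_lt_of_lt_csSup ⟨t0, hGt0⟩ hs2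
    exact htG.2 s hs1 hst i
  have hremu : ∀ j, E.rem j u = r j - k j * (u - t0) := remF u hu1 hEatsu
  have hut1 : u = t1 := by
    by_contra hne
    have hult : u < t1 := lt_of_le_of_ne hu2 hne
    obtain ⟨ε, hεpos, hεle, hεe⟩ := ext u hu1 hult hremu
    have hmem : u + ε ∈ G := by
      refine ⟨⟨by linarith, hεle⟩, ?_⟩
      intro s hs1 hs2 i
      rcases lt_or_ge s u with hc | hc
      · exact hEatsu s hs1 hc i
      · exact hεe s hc hs2.le i
    have := le_csSup hGbdd hmem
    linarith
  constructor
  · intro s hs1 hs2 i; exact hEatsu s hs1 (by rw [hut1]; exact hs2) i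
  · intro t ht1' ht2 j
    exact remF t ht1'
      (fun s hs1 hs2 i => hEatsu s hs1 (by rw [hut1]; exact lt_of_lt_of_le hs2 ht2) i) j

end PSExec

open PSExec in
lemma allocE (E : PSExec 3 3 ![![1,0,2],![0,1,2],![0,2,1]] (fun _ _ => True)) :
    E.alloc 0 0 = 0 ∧ E.alloc 0 1 = 3/4 ∧ E.alloc 0 2 = 1/4 := by
  have hr0 : ∀ j : Fin 3, E.rem j 0 = (fun _ : Fin 3 => (1:ℝ)) j := fun j => E.rem_zero j
  obtain ⟨e1, R1⟩ := E.step (t0 := 0) (t1 := 1/2) (fun _ => (1:ℝ)) ![1,0,0] ![2,1,0]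
    le_rfl (by norm_num) hr0 (fun i => one_pos)
    (by intro i j' _; fin_cases i <;> fin_cases j' <;> decide)
    (by intro j; fin_cases j <;> (simp only [Fin.sum_univ_three]; norm_num [Fin.ext_iff, Matrix.cons_val_two]))
    (by intro j t _ h1 h2; fin_cases j <;> norm_num <;> linarith)
  have hr2 : ∀ j : Fin 3, E.rem j (1/2) = ![0, 1/2, 1] j := by
    intro j
    rw [R1 (1/2) (by norm_num) le_rfl j]
    fin_cases j <;> norm_num
  obtain ⟨e2, R2⟩ := E.step (t0 := 1/2) (t1 := 3/4) ![0, 1/2, 1] ![1,1,2] ![0,2,1]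
    (by norm_num) (by norm_num) hr2
    (by intro i; fin_cases i <;> norm_num [Matrix.cons_val_two])
    (by intro i j' h; fin_cases i <;> fin_cases j' <;> revert h <;> norm_num [Matrix.cons_val_two] <;> decide)
    (by intro j; fin_cases j <;> (simp only [Fin.sum_univ_three]; norm_num [Fin.ext_iff, Matrix.cons_val_two]))
    (by intro j t h0 h1 h2; fin_cases j <;> revert h0 <;> norm_num [Matrix.cons_val_two] <;> linarith)
  have hr3 : ∀ j : Fin 3, E.rem j (3/4) = ![0, 0, 3/4] j := by
    intro j
    rw [R2 (3/4) (by norm_num) (by norm_num) j]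
    fin_cases j <;> norm_num
  obtain ⟨e3, R3⟩ := E.step (t0 := 3/4) (t1 := 1) ![0, 0, 3/4] ![2,2,2] ![0,0,3]
    (by norm_num) (by norm_num) hr3
    (by intro i; fin_cases i <;> norm_num [Matrix.cons_val_two])
    (by intro i j' h; fin_cases i <;> fin_cases j' <;> revert h <;> norm_num [Matrix.cons_val_two] <;> decide)
    (by intro j; fin_cases j <;> (simp only [Fin.sum_univ_three]; norm_num [Fin.ext_iff, Matrix.cons_val_two]))
    (by intro j t h0 h1 h2; fin_cases j <;> revert h0 <;> norm_num [Matrix.cons_val_two] <;> linarith)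
  have hex0 : ∀ s : ℝ, 1/2 ≤ s → E.rem 0 s ≤ 0 := by
    intro s hs
    have h := E.rem_mono 0 (t0 := 1/2) (by norm_num) hs
    rw [hr2 0] at h
    simpa using h
  have hex1 : ∀ s : ℝ, 3/4 ≤ s → E.rem 1 s ≤ 0 := by
    intro s hs
    have h := E.rem_mono 1 (t0 := 3/4) (by norm_num) hs
    rw [hr3 1] at h
    simpa using h
  have hex2 : ∀ s : ℝ, 1 ≤ s → E.rem 2 s ≤ 0 := by
    intro s hs
    have h := E.rem_mono 2 (t0 := 1) (by norm_num) hs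
    rw [R3 1 (by norm_num) le_rfl 2] at h
    norm_num [Matrix.cons_val_two] at h
    linarith
  -- allocation of item 0
  have hS0 : {s : ℝ | 0 < s ∧ E.eats 0 s = some 0} = ∅ := by
    ext s
    simp only [Set.mem_setOf_eq, Set.mem_empty_iff_false, iff_false, not_and]
    intro hs he
    rcases lt_or_ge s (1/2) with hc | hc
    · have h := e1 s hs hc 0
      rw [h] at he
      exact absurd (Option.some.inj he) (by decide)
    · exact absurd he (E.not_eats_of_rem 0 (by linarith) (hex0 s hc))
  have a00 : E.alloc 0 0 = 0 := by
    unfold PSExec.alloc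
    rw [hS0]
    simp
  -- allocation of item 1
  have hS1 : volume {s : ℝ | 0 < s ∧ E.eats 0 s = some 1}
      = volume (Set.Ioo (0:ℝ) (3/4)) := by
    apply PSExec.vol_squeeze (A := Set.Ioo (0:ℝ) (1/2) ∪ Set.Ioo (1/2:ℝ) (3/4))
    · rintro s (hs | hs)
      · exact ⟨hs.1, by have h := e1 s hs.1 hs.2 0; simpa using h⟩
      · refine ⟨by linarith [hs.1], ?_⟩
        have h := e2 s hs.1 hs.2 0
        simpa using h
    · rintro s ⟨hs0, he⟩
      refine ⟨hs0, ?_⟩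
      by_contra hc
      exact absurd he (E.not_eats_of_rem 0 hs0.le (hex1 s (not_lt.1 hc)))
    · have hd : Disjoint (Set.Ioo (0:ℝ) (1/2)) (Set.Ioo (1/2:ℝ) (3/4)) := by
        rw [Set.disjoint_left]
        rintro x ⟨_, h2⟩ ⟨h3, _⟩
        linarith
      rw [measure_union hd measurableSet_Ioo, Real.volume_Ioo, Real.volume_Ioo,
        Real.volume_Ioo, ← ENNReal.ofReal_add (by norm_num) (by norm_num)]
      norm_num
  have a01 : E.alloc 0 1 = 3/4 := by
    unfold PSExec.alloc
    rw [hS1, Real.volume_Ioo, ENNReal.toReal_ofReal (by norm_num)]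
    norm_num
  -- allocation of item 2
  have hS2 : volume {s : ℝ | 0 < s ∧ E.eats 0 s = some 2}
      = volume (Set.Icc (3/4:ℝ) 1) := by
    apply PSExec.vol_squeeze (A := Set.Ioo (3/4:ℝ) 1)
    · intro s hs
      refine ⟨by linarith [hs.1], ?_⟩
      have h := e3 s hs.1 hs.2 0
      simpa using h
    · rintro s ⟨hs0, he⟩
      constructor
      · by_contra hc
        push_neg at hc
        rcases lt_trichotomy s (1/2) with h | h | h
        · have h1 := e1 s hs0 h 0
          rw [h1] at he
          exact absurd (Option.some.inj he) (by decide)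
        · have hpos1 : 0 < E.rem 1 s := by
            rw [h, hr2 1]
            norm_num
          exact absurd he (E.not_eats_of_better (j' := 1) hs0.le hpos1 (by decide))
        · have h1 := e2 s h hc 0
          rw [h1] at he
          exact absurd (Option.some.inj he) (by decide)
      · by_contra hc
        exact absurd he (E.not_eats_of_rem 0 hs0.le (hex2 s (le_of_lt (not_le.1 hc))))
    · rw [Real.volume_Ioo, Real.volume_Icc]
  have a02 : E.alloc 0 2 = 1/4 := by
    unfold PSExec.alloc
    rw [hS2, Real.volume_Icc, ENNReal.toReal_ofReal (by norm_num)]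
    norm_num
  exact ⟨a00, a01, a02⟩

open PSExec in
lemma allocE' (E : PSExec 3 3 ![![0,1,2],![0,1,2],![0,2,1]] (fun _ _ => True)) :
    E.alloc 0 0 = 1/3 ∧ E.alloc 0 1 = 1/2 ∧ E.alloc 0 2 = 1/6 := by
  have hr0 : ∀ j : Fin 3, E.rem j 0 = (fun _ : Fin 3 => (1:ℝ)) j := fun j => E.rem_zero j
  obtain ⟨e1, R1⟩ := E.step (t0 := 0) (t1 := 1/3) (fun _ => (1:ℝ)) ![0,0,0] ![3,0,0]
    le_rfl (by norm_num) hr0 (fun i => one_pos)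
    (by intro i j' _; fin_cases i <;> fin_cases j' <;> decide)
    (by intro j; fin_cases j <;> (simp only [Fin.sum_univ_three]; norm_num [Fin.ext_iff, Matrix.cons_val_two]))
    (by intro j t _ h1 h2; fin_cases j <;> norm_num <;> linarith)
  have hr2 : ∀ j : Fin 3, E.rem j (1/3) = ![0, 1, 1] j := by
    intro j
    rw [R1 (1/3) (by norm_num) le_rfl j]
    fin_cases j <;> norm_num
  obtain ⟨e2, R2⟩ := E.step (t0 := 1/3) (t1 := 5/6) ![0, 1, 1] ![1,1,2] ![0,2,1]
    (by norm_num) (by norm_num) hr2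
    (by intro i; fin_cases i <;> norm_num [Matrix.cons_val_two])
    (by intro i j' h; fin_cases i <;> fin_cases j' <;> revert h <;> norm_num [Matrix.cons_val_two] <;> decide)
    (by intro j; fin_cases j <;> (simp only [Fin.sum_univ_three]; norm_num [Fin.ext_iff, Matrix.cons_val_two]))
    (by intro j t h0 h1 h2; fin_cases j <;> revert h0 <;> norm_num [Matrix.cons_val_two] <;> linarith)
  have hr3 : ∀ j : Fin 3, E.rem j (5/6) = ![0, 0, 1/2] j := by
    intro j
    rw [R2 (5/6) (by norm_num) (by norm_num) j]
    fin_cases j <;> norm_num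
  obtain ⟨e3, R3⟩ := E.step (t0 := 5/6) (t1 := 1) ![0, 0, 1/2] ![2,2,2] ![0,0,3]
    (by norm_num) (by norm_num) hr3
    (by intro i; fin_cases i <;> norm_num [Matrix.cons_val_two])
    (by intro i j' h; fin_cases i <;> fin_cases j' <;> revert h <;> norm_num [Matrix.cons_val_two] <;> decide)
    (by intro j; fin_cases j <;> (simp only [Fin.sum_univ_three]; norm_num [Fin.ext_iff, Matrix.cons_val_two]))
    (by intro j t h0 h1 h2; fin_cases j <;> revert h0 <;> norm_num [Matrix.cons_val_two] <;> linarith)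
  have hex0 : ∀ s : ℝ, 1/3 ≤ s → E.rem 0 s ≤ 0 := by
    intro s hs
    have h := E.rem_mono 0 (t0 := 1/3) (by norm_num) hs
    rw [hr2 0] at h
    simpa using h
  have hex1 : ∀ s : ℝ, 5/6 ≤ s → E.rem 1 s ≤ 0 := by
    intro s hs
    have h := E.rem_mono 1 (t0 := 5/6) (by norm_num) hs
    rw [hr3 1] at h
    simpa using h
  have hex2 : ∀ s : ℝ, 1 ≤ s → E.rem 2 s ≤ 0 := by
    intro s hs
    have h := E.rem_mono 2 (t0 := 1) (by norm_num) hs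
    rw [R3 1 (by norm_num) le_rfl 2] at h
    norm_num [Matrix.cons_val_two] at h
    linarith
  -- allocation of item 0
  have hS0 : volume {s : ℝ | 0 < s ∧ E.eats 0 s = some 0}
      = volume (Set.Ioo (0:ℝ) (1/3)) := by
    apply PSExec.vol_squeeze (A := Set.Ioo (0:ℝ) (1/3))
    · intro s hs
      exact ⟨hs.1, by have h := e1 s hs.1 hs.2 0; simpa using h⟩
    · rintro s ⟨hs0, he⟩
      refine ⟨hs0, ?_⟩
      by_contra hc
      exact absurd he (E.not_eats_of_rem 0 hs0.le (hex0 s (not_lt.1 hc)))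
    · rfl
  have a00 : E.alloc 0 0 = 1/3 := by
    unfold PSExec.alloc
    rw [hS0, Real.volume_Ioo, ENNReal.toReal_ofReal (by norm_num)]
    norm_num
  -- allocation of item 1
  have hS1 : volume {s : ℝ | 0 < s ∧ E.eats 0 s = some 1}
      = volume (Set.Icc (1/3:ℝ) (5/6)) := by
    apply PSExec.vol_squeeze (A := Set.Ioo (1/3:ℝ) (5/6))
    · intro s hs
      refine ⟨by linarith [hs.1], ?_⟩
      have h := e2 s hs.1 hs.2 0
      simpa using h
    · rintro s ⟨hs0, he⟩
      constructor
      · by_contra hc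
        push_neg at hc
        have h1 := e1 s hs0 hc 0
        rw [h1] at he
        exact absurd (Option.some.inj he) (by decide)
      · by_contra hc
        exact absurd he (E.not_eats_of_rem 0 hs0.le (hex1 s (le_of_lt (not_le.1 hc))))
    · rw [Real.volume_Ioo, Real.volume_Icc]
  have a01 : E.alloc 0 1 = 1/2 := by
    unfold PSExec.alloc
    rw [hS1, Real.volume_Icc, ENNReal.toReal_ofReal (by norm_num)]
    norm_num
  -- allocation of item 2
  have hS2 : volume {s : ℝ | 0 < s ∧ E.eats 0 s = some 2}
      = volume (Set.Icc (5/6:ℝ) 1) := by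
    apply PSExec.vol_squeeze (A := Set.Ioo (5/6:ℝ) 1)
    · intro s hs
      refine ⟨by linarith [hs.1], ?_⟩
      have h := e3 s hs.1 hs.2 0
      simpa using h
    · rintro s ⟨hs0, he⟩
      constructor
      · by_contra hc
        push_neg at hc
        rcases lt_trichotomy s (1/3) with h | h | h
        · have h1 := e1 s hs0 h 0
          rw [h1] at he
          exact absurd (Option.some.inj he) (by decide)
        · have hpos1 : 0 < E.rem 1 s := by
            rw [h, hr2 1]
            norm_num
          exact absurd he (E.not_eats_of_better (j' := 1) hs0.le hpos1 (by decide))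
        · have h1 := e2 s h hc 0
          rw [h1] at he
          exact absurd (Option.some.inj he) (by decide)
      · by_contra hc
        exact absurd he (E.not_eats_of_rem 0 hs0.le (hex2 s (le_of_lt (not_le.1 hc))))
    · rw [Real.volume_Ioo, Real.volume_Icc]
  have a02 : E.alloc 0 2 = 1/6 := by
    unfold PSExec.alloc
    rw [hS2, Real.volume_Icc, ENNReal.toReal_ofReal (by norm_num)]
    norm_num
  exact ⟨a00, a01, a02⟩

/-- Probabilistic Serial is not incentive-compatible.  With three agents and
three items `a, b, c` (indices `0, 1, 2`), truthful reports `b ≻ a ≻ c`, `a ≻ b ≻ c`,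
`a ≻ c ≻ b` give agent 1 the allocation `(0, 3/4, 1/4)`; if agent 1 misreports `a ≻ b ≻ c`
its allocation becomes `(1/3, 1/2, 1/6)`, and with utilities `(0.9, 1, 0)` its utility rises
from `0.75` to `0.8`. -/
theorem ps_not_incentive_compatible
    (rk rk' : Fin 3 → Fin 3 → ℕ)
    (hrk : rk = ![![1, 0, 2], ![0, 1, 2], ![0, 2, 1]])
    (hrk' : rk' = ![![0, 1, 2], ![0, 1, 2], ![0, 2, 1]])
    (E : PSExec 3 3 rk (fun _ _ => True))
    (E' : PSExec 3 3 rk' (fun _ _ => True)) :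
    E.alloc 0 0 = 0 ∧ E.alloc 0 1 = 3 / 4 ∧ E.alloc 0 2 = 1 / 4 ∧
    E'.alloc 0 0 = 1 / 3 ∧ E'.alloc 0 1 = 1 / 2 ∧ E'.alloc 0 2 = 1 / 6 ∧
    E.utility ![0.9, 1, 0] 0 = 0.75 ∧ E'.utility ![0.9, 1, 0] 0 = 0.8 := by
  subst hrk hrk'
  obtain ⟨a00, a01, a02⟩ := allocE E
  obtain ⟨b00, b01, b02⟩ := allocE' E'
  refine ⟨a00, a01, a02, b00, b01, b02, ?_, ?_⟩
  · unfold PSExec.utility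
    rw [Fin.sum_univ_three, a00, a01, a02]
    norm_num [Matrix.cons_val_two]
  · unfold PSExec.utility
    rw [Fin.sum_univ_three, b00, b01, b02]
    norm_num [Matrix.cons_val_two]
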